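/- Let B* be a subdivision of the complete binary tree B_d and let the vertices of B* be colored arbitrarily with k colors. Then there exists a vector (a_1, …, a_k) of nonnegative integers with a_1 + ⋯ + a_k = d such that for every i ∈ {1,…,k}, B* contains, as a subgraph, a subdivision of B_{a_i} all of whose branch vertices are colored with color i. -/

import Mathlib

open scoped Classical

noncomputable section

/-- A conflict-free coloring of a hyperedge set `E` with `k` colors: every hyperedge
has some color occurring on exactly one of its vertices. -/
def IsCFColoring {V : Type} {k : ℕ} (E : Set (Finset V)) (C : V → Fin k) : Prop :=
  ∀ e ∈ E, ∃ c : Fin k, (e.filter fun v => C v = c).card = 1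

/-- A unique-maximum coloring of a hyperedge set `E` with `k` colors: every hyperedge
has exactly one vertex whose color is maximum on the hyperedge. -/
def IsUMColoring {V : Type} {k : ℕ} (E : Set (Finset V)) (C : V → Fin k) : Prop :=
  ∀ e ∈ E, ∃! v, v ∈ e ∧ ∀ u ∈ e, C u ≤ C v

/-- An odd coloring of a hyperedge set `E` with `k` colors: every hyperedge
has some color occurring on an odd number of its vertices. -/
def IsOddColoring {V : Type} {k : ℕ} (E : Set (Finset V)) (C : V → Fin k) : Prop :=
  ∀ e ∈ E, ∃ c : Fin k, Odd ((e.filter fun v => C v = c).card)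

/-- The conflict-free chromatic number of a hypergraph. -/
def cfNum {V : Type} (E : Set (Finset V)) : ℕ :=
  sInf {k | ∃ C : V → Fin k, IsCFColoring E C}

/-- The unique-maximum chromatic number of a hypergraph. -/
def umNum {V : Type} (E : Set (Finset V)) : ℕ :=
  sInf {k | ∃ C : V → Fin k, IsUMColoring E C}

/-- The odd chromatic number of a hypergraph. -/
def oddNum {V : Type} (E : Set (Finset V)) : ℕ :=
  sInf {k | ∃ C : V → Fin k, IsOddColoring E C}

/-- The hyperedges of the path hypergraph of a graph `G`: vertex sets of simple paths. -/
def pathEdges {V : Type} (G : SimpleGraph V) : Set (Finset V) :=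
  {S | ∃ (u v : V) (p : G.Walk u v), p.IsPath ∧ S = p.support.toFinset}

/-- Unique-maximum chromatic number of a graph with respect to paths. -/
def UM {V : Type} (G : SimpleGraph V) : ℕ := umNum (pathEdges G)

/-- Conflict-free chromatic number of a graph with respect to paths. -/
def CF {V : Type} (G : SimpleGraph V) : ℕ := cfNum (pathEdges G)

/-- Odd chromatic number of a graph with respect to paths. -/
def ODD {V : Type} (G : SimpleGraph V) : ℕ := oddNum (pathEdges G)

/-- The complete binary tree with `d` levels (`2^d - 1` vertices), with vertices the
binary strings of length `< d`; each vertex `l` is adjacent to its children `b :: l`. -/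
def binaryTree (d : ℕ) : SimpleGraph {l : List Bool // l.length < d} :=
  SimpleGraph.fromRel fun a b => ∃ bit : Bool, b.1 = bit :: a.1

/-- `IsSubdivPaths G H f P` : the data `f` (branch vertices) and `P` (a path of `H` for
every edge of `G`) witness that `H` contains a subdivision of `G` as a subgraph:
`f` is injective, the paths are internally disjoint from each other and from the
branch vertices. -/
def IsSubdivPaths {V W : Type} (G : SimpleGraph V) (H : SimpleGraph W) (f : V → W)
    (P : ∀ u v, G.Adj u v → H.Walk (f u) (f v)) : Prop :=
  Function.Injective f ∧
  (∀ u v (h : G.Adj u v), (P u v h).IsPath) ∧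
  (∀ u v (h : G.Adj u v), P v u h.symm = (P u v h).reverse) ∧
  (∀ u v (h : G.Adj u v) (w : W),
    w ∈ (P u v h).support → w ≠ f u → w ≠ f v → w ∉ Set.range f) ∧
  (∀ u v (h : G.Adj u v) (u' v' : V) (h' : G.Adj u' v'), s(u, v) ≠ s(u', v') →
    ∀ w : W, w ∈ (P u v h).support → w ∈ (P u' v' h').support → w ∈ Set.range f)

/-- `H` contains a subdivision of `G` as a subgraph. -/
def ContainsSubdivision {V W : Type} (G : SimpleGraph V) (H : SimpleGraph W) : Prop :=
  ∃ f P, IsSubdivPaths G H f P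

/-- `IsSubdivision G H f P` : the data `f`, `P` witness that `H` is (exactly) a
subdivision of `G`: additionally to `IsSubdivPaths`, every vertex of `H` and every
edge of `H` comes from some path replacing an edge of `G`, or is a branch vertex. -/
def IsSubdivision {V W : Type} (G : SimpleGraph V) (H : SimpleGraph W) (f : V → W)
    (P : ∀ u v, G.Adj u v → H.Walk (f u) (f v)) : Prop :=
  IsSubdivPaths G H f P ∧
  (∀ w : W, w ∈ Set.range f ∨ ∃ u v h, w ∈ (P u v h).support) ∧
  (∀ a b : W, H.Adj a b ↔ ∃ u v h, s(a, b) ∈ (P u v h).edges)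

/-- `H` is a subdivision of `G`. -/
def Subdivides {V W : Type} (G : SimpleGraph V) (H : SimpleGraph W) : Prop :=
  ∃ f P, IsSubdivision G H f P

/-- A graph is UM-critical if every proper subgraph has strictly smaller
unique-maximum chromatic number with respect to paths. -/
def UMCritical {V : Type} (G : SimpleGraph V) : Prop :=
  ∀ G' : G.Subgraph, G' ≠ ⊤ → UM G'.coe < UM G

/-- A graph is `k`-UM-critical if it is UM-critical and its UM number equals `k`. -/
def UMCriticalK {V : Type} (k : ℕ) (G : SimpleGraph V) : Prop :=
  UMCritical G ∧ UM G = k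

/-- A family of sequences of distinct elements of `Fin n` is prefix set-free if no
nonempty prefix of a member (including the member itself) has the same underlying set
as another member. -/
def IsPSF {n : ℕ} (F : Finset (List (Fin n))) : Prop :=
  (∀ l ∈ F, l.Nodup) ∧
  ∀ A ∈ F, ∀ B ∈ F, A ≠ B →
    ∀ p : List (Fin n), p ≠ [] → p <+: A → p.toFinset ≠ B.toFinset

/-- A `[k,d,n]` prefix set-free family: ground set `Fin n`, every sequence of length at
least `k`, and at least `2^d` members. -/
def IsPSFFamily (k d n : ℕ) (F : Finset (List (Fin n))) : Prop :=
  IsPSF F ∧ (∀ l ∈ F, k ≤ l.length) ∧ 2 ^ d ≤ F.card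

namespace Stmt6Aux

abbrev BV (a : ℕ) := {l : List Bool // l.length < a}

def chld {a : ℕ} (u v : BV a) : Prop := ∃ b : Bool, v.1 = b :: u.1

lemma chld.ne {a : ℕ} {u v : BV a} (h : chld u v) : u ≠ v := by
  rcases h with ⟨b, hb⟩
  intro he
  have := congrArg List.length hb
  rw [he] at this
  simp at this

lemma chld_adj {a : ℕ} {u v : BV a} (h : chld u v) : (binaryTree a).Adj u v := by
  rw [binaryTree, SimpleGraph.fromRel_adj]
  exact ⟨h.ne, Or.inl h⟩

lemma chld_asymm {a : ℕ} {u v : BV a} (h : chld u v) (h' : chld v u) : False := by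
  rcases h with ⟨b, hb⟩; rcases h' with ⟨b', hb'⟩
  have h1 := congrArg List.length hb
  have h2 := congrArg List.length hb'
  simp at h1 h2; omega

lemma adj_cases {a : ℕ} {u v : BV a} (h : (binaryTree a).Adj u v) : chld u v ∨ chld v u := by
  rw [binaryTree, SimpleGraph.fromRel_adj] at h
  exact h.2

lemma sym2_ne_of_chld {a : ℕ} {u v u' v' : BV a} (hc : chld u v) (hc' : chld u' v')
    (h : s(u, v) ≠ s(u', v')) : (u, v) ≠ (u', v') := by
  intro he
  apply h
  cases he
  rfl

lemma chld_pair_eq {a : ℕ} {u v u' v' : BV a} (hc : chld u v) (hc' : chld u' v')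
    (h : s(u, v) = s(u', v')) : u = u' ∧ v = v' := by
  rw [Sym2.eq_iff] at h
  rcases h with ⟨h1, h2⟩ | ⟨h1, h2⟩
  · exact ⟨h1, h2⟩
  · subst h1; subst h2; exact absurd hc' (fun h' => chld_asymm hc h')

def incl {b a : ℕ} (hba : b ≤ a) (x : BV b) : BV a := ⟨x.1, lt_of_lt_of_le x.2 hba⟩

lemma incl_inj {b a : ℕ} (hba : b ≤ a) : Function.Injective (incl hba) := by
  intro x y h
  exact Subtype.ext (show x.1 = y.1 from congrArg (fun z : BV a => z.1) h)

lemma adj_incl {b a : ℕ} (hba : b ≤ a) {u v : BV b} (h : (binaryTree b).Adj u v) :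
    (binaryTree a).Adj (incl hba u) (incl hba v) := by
  rw [binaryTree, SimpleGraph.fromRel_adj] at h ⊢
  refine ⟨fun he => h.1 (Subtype.ext (show u.1 = v.1 from congrArg (fun z : BV a => z.1) he)), ?_⟩
  rcases h.2 with ⟨b', hb⟩ | ⟨b', hb⟩
  · exact Or.inl ⟨b', hb⟩
  · exact Or.inr ⟨b', hb⟩

lemma subdivPaths_trunc {W : Type} {Bstar : SimpleGraph W} {a b : ℕ} (hba : b ≤ a)
    (g : BV a → W) (Q : ∀ u v, (binaryTree a).Adj u v → Bstar.Walk (g u) (g v))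
    (h : IsSubdivPaths (binaryTree a) Bstar g Q) :
    IsSubdivPaths (binaryTree b) Bstar (fun x => g (incl hba x))
      (fun u v h' => Q _ _ (adj_incl hba h')) := by
  obtain ⟨hinj, hpath, hrev, hint, hdisj⟩ := h
  refine ⟨fun x y hxy => incl_inj hba (hinj hxy), fun u v h' => hpath _ _ _, ?_, ?_, ?_⟩
  · intro u v h'
    exact hrev _ _ (adj_incl hba h')
  · intro u v h' w hw hwu hwv hr
    rcases hr with ⟨x, hx⟩
    exact hint _ _ (adj_incl hba h') w hw hwu hwv ⟨incl hba x, hx⟩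
  · intro u v h' u' v' h'' hne w hw hw'
    have hne2 : s(incl hba u, incl hba v) ≠ s(incl hba u', incl hba v') := by
      intro he
      apply hne
      rw [Sym2.eq_iff] at he ⊢
      rcases he with ⟨h1, h2⟩ | ⟨h1, h2⟩
      · exact Or.inl ⟨incl_inj hba h1, incl_inj hba h2⟩
      · exact Or.inr ⟨incl_inj hba h1, incl_inj hba h2⟩
    have hrg : w ∈ Set.range g := hdisj _ _ (adj_incl hba h') _ _ (adj_incl hba h'') hne2 w hw hw'
    by_cases h1 : w = g (incl hba u)
    · exact ⟨u, h1.symm⟩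
    by_cases h2 : w = g (incl hba v)
    · exact ⟨v, h2.symm⟩
    exact absurd hrg (hint _ _ (adj_incl hba h') w hw h1 h2)


open SimpleGraph in
lemma isPath_append {W : Type} {Bstar : SimpleGraph W} {u v w : W} {p : Bstar.Walk u v}
    {q : Bstar.Walk v w} (hp : p.IsPath) (hq : q.IsPath)
    (hmeet : ∀ x, x ∈ p.support → x ∈ q.support → x = v) :
    (p.append q).IsPath := by
  rw [SimpleGraph.Walk.isPath_def, SimpleGraph.Walk.support_append]
  refine List.Nodup.append hp.support_nodup (hq.support_nodup.tail) ?_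
  intro x hx hx'
  have hxq : x ∈ q.support := List.mem_of_mem_tail hx'
  have hxv : x = v := hmeet x hx hxq
  have hn := hq.support_nodup
  rw [q.support_eq_cons] at hn
  exact (List.nodup_cons.mp hn).1 (hxv ▸ hx')


section Orient

variable {W : Type} {Bstar : SimpleGraph W}

lemma orient {a : ℕ} (g : BV a → W)
    (D : ∀ u v : BV a, chld u v → Bstar.Walk (g u) (g v))
    (hinj : Function.Injective g)
    (hpath : ∀ u v h, (D u v h).IsPath)
    (hint : ∀ u v h w, w ∈ (D u v h).support → w ≠ g u → w ≠ g v → w ∉ Set.range g)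
    (hdisj : ∀ u v h u' v' h', (u, v) ≠ (u', v') →
      ∀ w, w ∈ (D u v h).support → w ∈ (D u' v' h').support → w ∈ Set.range g) :
    ∃ P : ∀ u v, (binaryTree a).Adj u v → Bstar.Walk (g u) (g v),
      IsSubdivPaths (binaryTree a) Bstar g P ∧
      ∀ u v h w, w ∈ (P u v h).support → ∃ u' v' h', w ∈ (D u' v' h').support := by
  refine ⟨fun u v h => if hc : chld u v then D u v hc
    else (D v u ((adj_cases h).resolve_left hc)).reverse, ⟨hinj, ?_, ?_, ?_, ?_⟩, ?_⟩
  · -- paths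
    intro u v h
    by_cases hc : chld u v
    · simp only [dif_pos hc]; exact hpath u v hc
    · simp only [dif_neg hc]; exact (hpath _ _ _).reverse
  · -- reverse compatibility
    intro u v h
    by_cases hc : chld u v
    · have h1 : ¬ chld v u := fun h' => chld_asymm hc h'
      simp only [dif_pos hc, dif_neg h1]
    · have hc' : chld v u := (adj_cases h).resolve_left hc
      have h1 : ¬ chld v u → False := fun h2 => h2 hc'
      simp only [dif_pos hc', dif_neg hc, SimpleGraph.Walk.reverse_reverse]
  · -- internal vertices avoid range
    intro u v h w hw hwu hwv
    by_cases hc : chld u v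
    · simp only [dif_pos hc] at hw; exact hint u v hc w hw hwu hwv
    · simp only [dif_neg hc] at hw
      rw [SimpleGraph.Walk.support_reverse, List.mem_reverse] at hw
      exact hint v u _ w hw hwv hwu
  · -- pairwise intersections in range
    intro u v h u' v' h' hne w hw hw'
    by_cases hc : chld u v <;> by_cases hc' : chld u' v'
    · simp only [dif_pos hc] at hw; simp only [dif_pos hc'] at hw'
      refine hdisj u v hc u' v' hc' ?_ w hw hw'
      intro he; exact hne (by cases he; rfl)
    · simp only [dif_pos hc] at hw
      simp only [dif_neg hc', SimpleGraph.Walk.support_reverse, List.mem_reverse] at hw'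
      refine hdisj u v hc v' u' _ ?_ w hw hw'
      intro he
      apply hne
      cases he
      exact Sym2.eq_swap
    · simp only [dif_neg hc, SimpleGraph.Walk.support_reverse, List.mem_reverse] at hw
      simp only [dif_pos hc'] at hw'
      refine hdisj v u _ u' v' hc' ?_ w hw hw'
      intro he
      apply hne
      cases he
      exact Sym2.eq_swap
    · simp only [dif_neg hc, SimpleGraph.Walk.support_reverse, List.mem_reverse] at hw
      simp only [dif_neg hc', SimpleGraph.Walk.support_reverse, List.mem_reverse] at hw'
      refine hdisj v u _ v' u' _ ?_ w hw hw'
      intro he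
      apply hne
      cases he
      rfl
  · -- support characterization
    intro u v h w hw
    by_cases hc : chld u v
    · simp only [dif_pos hc] at hw; exact ⟨u, v, hc, hw⟩
    · simp only [dif_neg hc, SimpleGraph.Walk.support_reverse, List.mem_reverse] at hw
      exact ⟨v, u, _, hw⟩

end Orient


section MergeDef

lemma chld_snd_ne {a : ℕ} {u v : BV a} (hc : chld u v) : v.1 ≠ [] := by
  rcases hc with ⟨b, hb⟩; simp [hb]

def att {a : ℕ} (b : Bool) (y : BV a) : BV (a + 1) :=
  ⟨y.1 ++ [b], by have := y.2; simp; omega⟩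

def body {a : ℕ} (u : BV (a + 1)) (hne : u.1 ≠ []) : BV a :=
  ⟨u.1.dropLast, by
    have h1 := u.2
    have h2 : u.1.length ≠ 0 := fun h0 => hne (List.length_eq_zero_iff.mp h0)
    simp only [List.length_dropLast]
    omega⟩

lemma att_body {a : ℕ} (u : BV (a + 1)) (hne : u.1 ≠ []) :
    att (u.1.getLast hne) (body u hne) = u := by
  apply Subtype.ext
  show u.1.dropLast ++ [u.1.getLast hne] = u.1
  exact List.dropLast_append_getLast hne

lemma body_att {a : ℕ} (b : Bool) (y : BV a) (hne : (att b y).1 ≠ []) :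
    body (att b y) hne = y := by
  apply Subtype.ext
  show (y.1 ++ [b]).dropLast = y.1
  exact List.dropLast_concat

lemma att_getLast {a : ℕ} (b : Bool) (y : BV a) (hne : (att b y).1 ≠ []) :
    (att b y).1.getLast hne = b := List.getLast_concat

lemma att_ne_nil {a : ℕ} (b : Bool) (y : BV a) : (att b y).1 ≠ [] := by
  show y.1 ++ [b] ≠ []
  simp

lemma chld_body {a : ℕ} {u v : BV (a + 1)} (hc : chld u v) (hne : u.1 ≠ []) :
    chld (body u hne) (body v (chld_snd_ne hc)) := by
  rcases hc with ⟨b, hb⟩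
  refine ⟨b, ?_⟩
  show v.1.dropLast = b :: u.1.dropLast
  obtain ⟨x, xs, hx⟩ := List.exists_cons_of_ne_nil hne
  rw [hb, hx]
  simp

lemma getLast_chld {a : ℕ} {u v : BV (a + 1)} (hc : chld u v) (hne : u.1 ≠ []) :
    v.1.getLast (chld_snd_ne hc) = u.1.getLast hne := by
  rcases hc with ⟨b, hb⟩
  simp only [hb]
  rw [List.getLast_cons hne]

lemma body_stem {a : ℕ} {u v : BV (a + 1)} (hc : chld u v) (hne : u.1 = [])
    (ha : 0 < a) : body v (chld_snd_ne hc) = ⟨[], ha⟩ := by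
  rcases hc with ⟨b, hb⟩
  apply Subtype.ext
  show v.1.dropLast = []
  rw [hb, hne]
  rfl

lemma stem_v_eq {a : ℕ} {u v : BV (a + 1)} (hc : chld u v) (hne : u.1 = []) :
    v.1 = [v.1.getLast (chld_snd_ne hc)] := by
  rcases hc with ⟨bit, hb⟩
  simp only [hb, hne]
  simp

variable {W : Type} (Bstar : SimpleGraph W) {a : ℕ} (ha : 0 < a)
variable (g : Bool → BV a → W) (rr : Bool → W) (r : W)

def mergeG : BV (a + 1) → W := fun l =>
  if hne : l.1 = [] then r else g (l.1.getLast hne) (body l hne)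

lemma mergeG_root (h : (0 : ℕ) < a + 1) : mergeG g r ⟨[], h⟩ = r := dif_pos rfl

lemma mergeG_nil (u : BV (a + 1)) (hne : u.1 = []) : mergeG g r u = r := dif_pos hne

lemma mergeG_cons (u : BV (a + 1)) (hne : u.1 ≠ []) :
    mergeG g r u = g (u.1.getLast hne) (body u hne) := dif_neg hne

lemma mergeG_att (b : Bool) (y : BV a) : mergeG g r (att b y) = g b y := by
  rw [mergeG_cons g r _ (att_ne_nil b y), att_getLast, body_att]

lemma mergeG_range (w : W) : w ∈ Set.range (mergeG g r) ↔ w = r ∨ ∃ b y, w = g b y := by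
  constructor
  · rintro ⟨x, rfl⟩
    by_cases hne : x.1 = []
    · left; exact dif_pos hne
    · right; exact ⟨_, _, (mergeG_cons g r x hne)⟩
  · intro h
    rcases h with h | ⟨b, y, h⟩
    · exact ⟨⟨[], by simp⟩, (mergeG_root g r _).trans h.symm⟩
    · exact ⟨att b y, (mergeG_att g r b y).trans h.symm⟩

variable (Rw : ∀ b, Bstar.Walk r (rr b)) (Rh : ∀ b, Bstar.Walk (rr b) (g b ⟨[], ha⟩))
variable (Q : ∀ b (u v : BV a), (binaryTree a).Adj u v → Bstar.Walk (g b u) (g b v))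

lemma mergeG_stem_end {u v : BV (a + 1)} (hc : chld u v) (hne : u.1 = []) :
    mergeG g r v = g (v.1.getLast (chld_snd_ne hc)) ⟨[], ha⟩ := by
  rw [mergeG_cons g r v (chld_snd_ne hc), body_stem hc hne ha]

lemma mergeG_inner_end {u v : BV (a + 1)} (hc : chld u v) (hne : u.1 ≠ []) :
    mergeG g r v = g (u.1.getLast hne) (body v (chld_snd_ne hc)) := by
  rw [mergeG_cons g r v (chld_snd_ne hc), getLast_chld hc hne]

def mergeD : ∀ u v : BV (a + 1), chld u v → Bstar.Walk (mergeG g r u) (mergeG g r v) :=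
  fun u v hc =>
    if hne : u.1 = [] then
      ((Rw (v.1.getLast (chld_snd_ne hc))).append (Rh (v.1.getLast (chld_snd_ne hc)))).copy
        (mergeG_nil g r u hne).symm
        (mergeG_stem_end ha g r hc hne).symm
    else
      ((Q (u.1.getLast hne) (body u hne) (body v (chld_snd_ne hc))
          (chld_adj (chld_body hc hne)))).copy
        (mergeG_cons g r u hne).symm
        (mergeG_inner_end g r hc hne).symm

lemma mergeD_stem_eq {u v : BV (a + 1)} (hc : chld u v) (hne : u.1 = []) :
    mergeD Bstar ha g rr r Rw Rh Q u v hc =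
      ((Rw (v.1.getLast (chld_snd_ne hc))).append (Rh (v.1.getLast (chld_snd_ne hc)))).copy
        (mergeG_nil g r u hne).symm (mergeG_stem_end ha g r hc hne).symm := dif_pos hne

lemma mergeD_inner_eq {u v : BV (a + 1)} (hc : chld u v) (hne : u.1 ≠ []) :
    mergeD Bstar ha g rr r Rw Rh Q u v hc =
      ((Q (u.1.getLast hne) (body u hne) (body v (chld_snd_ne hc))
          (chld_adj (chld_body hc hne)))).copy
        (mergeG_cons g r u hne).symm (mergeG_inner_end g r hc hne).symm := dif_neg hne

lemma mergeD_stem {u v : BV (a + 1)} (hc : chld u v) (hne : u.1 = []) (w : W) :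
    w ∈ (mergeD Bstar ha g rr r Rw Rh Q u v hc).support ↔
      w ∈ (Rw (v.1.getLast (chld_snd_ne hc))).support ∨
        w ∈ (Rh (v.1.getLast (chld_snd_ne hc))).support := by
  rw [mergeD, dif_pos hne]
  rw [SimpleGraph.Walk.support_copy, SimpleGraph.Walk.mem_support_append_iff]

lemma mergeD_inner {u v : BV (a + 1)} (hc : chld u v) (hne : u.1 ≠ []) (w : W) :
    w ∈ (mergeD Bstar ha g rr r Rw Rh Q u v hc).support ↔
      w ∈ (Q (u.1.getLast hne) (body u hne) (body v (chld_snd_ne hc))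
        (chld_adj (chld_body hc hne))).support := by
  rw [mergeD, dif_neg hne]
  rw [SimpleGraph.Walk.support_copy]

end MergeDef

section Broom

variable {W : Type} {k : ℕ} (Bstar : SimpleGraph W) (C : W → Fin k)

def Broom (S : Set W) (r : W) (i : Fin k) (a : ℕ) : Prop :=
  ∀ ha : 0 < a, ∃ (g : BV a → W) (Q : ∀ u v, (binaryTree a).Adj u v → Bstar.Walk (g u) (g v))
    (R : Bstar.Walk r (g ⟨[], ha⟩)),
    IsSubdivPaths (binaryTree a) Bstar g Q ∧
    (∀ x, C (g x) = i) ∧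
    R.IsPath ∧
    (∀ x, g x ∈ S) ∧
    (∀ u v h w, w ∈ (Q u v h).support → w ∈ S) ∧
    (∀ w ∈ R.support, w ∈ S) ∧
    (∀ w ∈ R.support, w ≠ g ⟨[], ha⟩ → w ∉ Set.range g ∧ ∀ u v h, w ∉ (Q u v h).support)

variable {Bstar C}

lemma Broom.zero {S : Set W} {r : W} {i : Fin k} : Broom Bstar C S r i 0 := by
  intro ha; omega

lemma Broom.mono_set {S S' : Set W} {r : W} {i : Fin k} {a : ℕ} (hSS : S ⊆ S')
    (h : Broom Bstar C S r i a) : Broom Bstar C S' r i a := by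
  intro ha
  obtain ⟨g, Q, R, h1, h2, h3, h4, h5, h6, h7⟩ := h ha
  exact ⟨g, Q, R, h1, h2, h3, fun x => hSS (h4 x), fun u v h w hw => hSS (h5 u v h w hw),
    fun w hw => hSS (h6 w hw), h7⟩

lemma Broom.single {S : Set W} {r : W} {i : Fin k} (hr : r ∈ S) (hc : C r = i) :
    Broom Bstar C S r i 1 := by
  intro ha
  have hadj : ∀ (u v : BV 1), ¬ (binaryTree 1).Adj u v := by
    intro u v hadj
    rcases adj_cases hadj with h | h <;>
    · rcases h with ⟨b, hb⟩
      have h1 : u.1.length < 1 := u.2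
      have h2 : v.1.length < 1 := v.2
      have := congrArg List.length hb
      simp at this
      omega
  refine ⟨fun _ => r, fun u v h => absurd h (hadj u v), SimpleGraph.Walk.nil, ?_, ?_, ?_, ?_, ?_, ?_, ?_⟩
  · refine ⟨?_, ?_, ?_, ?_, ?_⟩
    · intro x y _
      have hx : x.1 = [] := List.length_eq_zero_iff.mp (by omega)
      have hy : y.1 = [] := List.length_eq_zero_iff.mp (by omega)
      exact Subtype.ext (hx.trans hy.symm)
    all_goals intro u v h; exact absurd h (hadj u v)
  · intro x; exact hc
  · exact SimpleGraph.Walk.IsPath.nil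
  · intro x; exact hr
  · intro u v h; exact absurd h (hadj u v)
  · intro w hw; simp at hw; subst hw; exact hr
  · intro w hw hne; simp at hw; exact absurd (congrArg id hw) hne

lemma Broom.mono_depth {S : Set W} {r : W} {i : Fin k} {a b : ℕ} (hba : b ≤ a)
    (h : Broom Bstar C S r i a) : Broom Bstar C S r i b := by
  intro hb
  obtain ⟨g, Q, R, h1, h2, h3, h4, h5, h6, h7⟩ := h (lt_of_lt_of_le hb hba)
  refine ⟨fun x => g (incl hba x), fun u v h' => Q _ _ (adj_incl hba h'),
    R, subdivPaths_trunc hba g Q h1, fun x => h2 _, h3, fun x => h4 _,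
    fun u v h' w hw => h5 _ _ _ w hw, h6, ?_⟩
  · intro w hw hne
    have hne' : w ≠ g ⟨[], lt_of_lt_of_le hb hba⟩ := hne
    obtain ⟨hr1, hr2⟩ := h7 w hw hne'
    refine ⟨?_, fun u v h' => hr2 _ _ _⟩
    intro ⟨x, hx⟩
    exact hr1 ⟨incl hba x, hx⟩

lemma Broom.extend {S : Set W} {r0 r1 : W} {i : Fin k} {a : ℕ}
    (h : Broom Bstar C S r0 i a) (R0 : Bstar.Walk r1 r0) (hR0 : R0.IsPath)
    (hmeet : ∀ w ∈ R0.support, w ∈ S → w = r0) :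
    Broom Bstar C (S ∪ {w | w ∈ R0.support}) r1 i a := by
  intro ha
  obtain ⟨g, Q, R, h1, h2, h3, h4, h5, h6, h7⟩ := h ha
  refine ⟨g, Q, R0.append R, h1, h2, ?_, fun x => Or.inl (h4 x),
    fun u v h' w hw => Or.inl (h5 _ _ _ w hw), ?_, ?_⟩
  · exact isPath_append hR0 h3 (fun x hx hx' => hmeet x hx (h6 x hx'))
  · intro w hw
    rw [SimpleGraph.Walk.mem_support_append_iff] at hw
    rcases hw with hw | hw
    · exact Or.inr hw
    · exact Or.inl (h6 w hw)
  · intro w hw hne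
    rw [SimpleGraph.Walk.mem_support_append_iff] at hw
    rcases hw with hw | hw
    · -- w in R0.support; if w in tree, then w ∈ S so w = r0, and r0 ∈ tree near root...
      constructor
      · intro ⟨x, hx⟩
        have hwS : w ∈ S := hx ▸ h4 x
        have hwr0 : w = r0 := hmeet w hw hwS
        have hr0R : w ∈ R.support := hwr0 ▸ SimpleGraph.Walk.start_mem_support R
        exact (h7 w hr0R hne).1 ⟨x, hx⟩
      · intro u v h' hwQ
        have hwS : w ∈ S := h5 _ _ _ w hwQ
        have hwr0 : w = r0 := hmeet w hw hwS
        have hr0R : w ∈ R.support := hwr0 ▸ SimpleGraph.Walk.start_mem_support R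
        exact (h7 w hr0R hne).2 u v h' hwQ
    · exact h7 w hw hne

lemma Broom.merge {S : Bool → Set W} {rr : Bool → W} {r : W} {c : Fin k} {a : ℕ}
    (hB : ∀ b, Broom Bstar C (S b) (rr b) c a)
    (Rw : ∀ b, Bstar.Walk r (rr b))
    (hRwp : ∀ b, (Rw b).IsPath)
    (hSdisj : ∀ w, w ∈ S false → w ∉ S true)
    (hmeet : ∀ b, ∀ w ∈ (Rw b).support, w ∈ S b → w = rr b)
    (hXS : ∀ b, ∀ w ∈ (Rw b).support, w ∉ S (!b))
    (hRm : ∀ w ∈ (Rw false).support, w ∈ (Rw true).support → w = r)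
    (hCr : C r = c) :
    Broom Bstar C
      (S false ∪ S true ∪ {w | w ∈ (Rw false).support} ∪ {w | w ∈ (Rw true).support})
      r c (a + 1) := by
  have hrT : r ∈ (S false ∪ S true ∪ {w | w ∈ (Rw false).support} ∪ {w | w ∈ (Rw true).support}) :=
    Or.inr (SimpleGraph.Walk.start_mem_support _)
  rcases Nat.eq_zero_or_pos a with rfl | ha
  · exact Broom.single hrT hCr
  intro ha1
  choose g Q Rh hsub hmono hRhp hgS hQS hRhS hh7 using fun b => hB b ha
  -- derived disjointness facts
  have hSdisj2 : ∀ b w, w ∈ S b → w ∉ S (!b) := by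
    intro b w hw hw'
    cases b
    · exact hSdisj w hw hw'
    · exact hSdisj w hw' hw
  have hrS : ∀ b, r ∉ S b := by
    intro b hr
    have h1 := hXS (!b) r (SimpleGraph.Walk.start_mem_support _)
    rw [Bool.not_not] at h1
    exact h1 hr
  have hrrS : ∀ b, rr b ∈ S b := fun b => hRhS b _ (SimpleGraph.Walk.start_mem_support _)
  have hQinS : ∀ b u v h w, w ∈ (Q b u v h).support → w ∈ S b := hQS
  have hgrange : ∀ b y, g b y ∈ S b := hgS
  have hbne : ∀ b b' : Bool, b ≠ b' → b' = !b := by decide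
  have hRm2 : ∀ b, ∀ w ∈ (Rw b).support, w ∈ (Rw (!b)).support → w = r := by
    intro b
    cases b
    · exact hRm
    · intro w h1 h2
      exact hRm w h2 h1
  -- injectivity
  have hinj : Function.Injective (mergeG g r) := by
    intro x y hxy
    by_cases hx : x.1 = [] <;> by_cases hy : y.1 = []
    · exact Subtype.ext (hx.trans hy.symm)
    · rw [mergeG_nil g r x hx, mergeG_cons g r y hy] at hxy
      exact absurd (hxy ▸ hgrange _ _) (hrS _)
    · rw [mergeG_nil g r y hy, mergeG_cons g r x hx] at hxy
      exact absurd (hxy.symm ▸ hgrange _ _) (hrS _)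
    · rw [mergeG_cons g r x hx, mergeG_cons g r y hy] at hxy
      by_cases hss : x.1.getLast hx = y.1.getLast hy
      · rw [hss] at hxy
        have hb := (hsub (y.1.getLast hy)).1 hxy
        have e1 := att_body x hx
        have e2 := att_body y hy
        rw [← e1, ← e2, hss, hb]
      · have h1 := hgrange (x.1.getLast hx) (body x hx)
        rw [hxy] at h1
        have h2 := hSdisj2 _ _ (hgrange (y.1.getLast hy) (body y hy))
        rw [← hbne _ _ (fun h => hss h.symm)] at h2
        exact absurd h1 h2
  -- paths
  have hpath : ∀ u v hc, (mergeD Bstar ha g rr r Rw Rh Q u v hc).IsPath := by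
    intro u v hc
    by_cases hne : u.1 = []
    · rw [mergeD_stem_eq Bstar ha g rr r Rw Rh Q hc hne, SimpleGraph.Walk.isPath_copy]
      refine isPath_append (hRwp _) (hRhp _) ?_
      intro x hx hx'
      exact hmeet _ x hx (hRhS _ x hx')
    · rw [mergeD_inner_eq Bstar ha g rr r Rw Rh Q hc hne, SimpleGraph.Walk.isPath_copy]
      exact (hsub _).2.1 _ _ _
  -- internal vertices avoid range
  have hint : ∀ u v hc w, w ∈ (mergeD Bstar ha g rr r Rw Rh Q u v hc).support →
      w ≠ mergeG g r u → w ≠ mergeG g r v → w ∉ Set.range (mergeG g r) := by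
    intro u v hc w hw hwu hwv hr
    rw [mergeG_range] at hr
    by_cases hne : u.1 = []
    · rw [mergeD_stem Bstar ha g rr r Rw Rh Q hc hne] at hw
      rcases hr with hwr | ⟨b', y, hwr⟩
      · exact hwu (hwr.trans (mergeG_nil g r u hne).symm)
      · have hwv' : w ≠ g (v.1.getLast (chld_snd_ne hc)) ⟨[], ha⟩ := by
          rw [← mergeG_stem_end ha g r hc hne]
          exact hwv
        rcases hw with hw | hw
        · have hbb : b' = v.1.getLast (chld_snd_ne hc) := by
            by_contra hne2
            have hb2 : b' = !(v.1.getLast (chld_snd_ne hc)) := hbne _ _ (fun h => hne2 h.symm)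
            apply hXS _ _ hw
            rw [← hb2, hwr]
            exact hgrange b' y
          have hwS : w ∈ S (v.1.getLast (chld_snd_ne hc)) := by
            rw [hwr, hbb]
            exact hgrange _ y
          have hwrr : w = rr _ := hmeet _ w hw hwS
          have hst : w ∈ (Rh (v.1.getLast (chld_snd_ne hc))).support := by
            rw [hwrr]
            exact SimpleGraph.Walk.start_mem_support _
          refine (hh7 _ _ hst hwv').1 ⟨y, ?_⟩
          rw [hwr, hbb]
        · by_cases hbb : b' = v.1.getLast (chld_snd_ne hc)
          · refine (hh7 _ _ hw hwv').1 ⟨y, ?_⟩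
            rw [hwr, hbb]
          · have hb2 : b' = !(v.1.getLast (chld_snd_ne hc)) := hbne _ _ (fun h => hbb h.symm)
            have h1 := hRhS _ _ hw
            apply hSdisj2 _ _ h1
            rw [← hb2, hwr]
            exact hgrange b' y
    · rw [mergeD_inner Bstar ha g rr r Rw Rh Q hc hne] at hw
      rcases hr with hwr | ⟨b', y, hwr⟩
      · exact hrS _ (by rw [← hwr]; exact hQinS _ _ _ _ _ hw)
      · by_cases hbb : b' = u.1.getLast hne
        · have hwu' : w ≠ g (u.1.getLast hne) (body u hne) := by
            rw [← mergeG_cons g r u hne]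
            exact hwu
          have hwv' : w ≠ g (u.1.getLast hne) (body v (chld_snd_ne hc)) := by
            rw [← mergeG_inner_end g r hc hne]
            exact hwv
          refine (hsub _).2.2.2.1 _ _ _ w hw hwu' hwv' ⟨y, ?_⟩
          rw [hwr, hbb]
        · have hb2 : b' = !(u.1.getLast hne) := hbne _ _ (fun h => hbb h.symm)
          have h1 := hQinS _ _ _ _ _ hw
          apply hSdisj2 _ _ h1
          rw [← hb2, hwr]
          exact hgrange b' y
  -- pairwise intersections
  have hdisj : ∀ u v hc u' v' hc', (u, v) ≠ (u', v') →
      ∀ w, w ∈ (mergeD Bstar ha g rr r Rw Rh Q u v hc).support →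
        w ∈ (mergeD Bstar ha g rr r Rw Rh Q u' v' hc').support →
          w ∈ Set.range (mergeG g r) := by
    intro u v hc u' v' hc' hpne w hw hw'
    rw [mergeG_range]
    by_cases hne : u.1 = [] <;> by_cases hne' : u'.1 = []
    · -- both stems
      rw [mergeD_stem Bstar ha g rr r Rw Rh Q hc hne] at hw
      rw [mergeD_stem Bstar ha g rr r Rw Rh Q hc' hne'] at hw'
      have huu : u = u' := Subtype.ext (hne.trans hne'.symm)
      have hvv : v ≠ v' := by
        intro he
        exact hpne (by rw [huu, he])
      have hbb : v'.1.getLast (chld_snd_ne hc') = !(v.1.getLast (chld_snd_ne hc)) := by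
        apply hbne
        intro he
        apply hvv
        apply Subtype.ext
        rw [stem_v_eq hc hne, stem_v_eq hc' hne', he]
      rw [hbb] at hw'
      rcases hw with hw | hw <;> rcases hw' with hw' | hw'
      · -- both in Rw
        left
        exact hRm2 _ w hw hw'
      · exact absurd (hRhS _ _ hw') (hXS _ _ hw)
      · have h1 := hXS _ _ hw'
        rw [Bool.not_not] at h1
        exact absurd (hRhS _ _ hw) h1
      · exact absurd (hRhS _ _ hw') (hSdisj2 _ _ (hRhS _ _ hw))
    · -- stem vs inner
      rw [mergeD_stem Bstar ha g rr r Rw Rh Q hc hne] at hw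
      rw [mergeD_inner Bstar ha g rr r Rw Rh Q hc' hne'] at hw'
      have hwS : w ∈ S (u'.1.getLast hne') := hQinS _ _ _ _ _ hw'
      by_cases hbb : v.1.getLast (chld_snd_ne hc) = u'.1.getLast hne'
      · rw [← hbb] at hw'
        rcases hw with hw | hw
        · have hwr : w = rr _ := hmeet _ w hw (by rw [hbb]; exact hwS)
          have hst : w ∈ (Rh (v.1.getLast (chld_snd_ne hc))).support := by
            rw [hwr]
            exact SimpleGraph.Walk.start_mem_support _
          by_cases hroot : w = g (v.1.getLast (chld_snd_ne hc)) ⟨[], ha⟩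
          · exact Or.inr ⟨_, _, hroot⟩
          · exact absurd hw' ((hh7 _ _ hst hroot).2 _ _ _)
        · by_cases hroot : w = g (v.1.getLast (chld_snd_ne hc)) ⟨[], ha⟩
          · exact Or.inr ⟨_, _, hroot⟩
          · exact absurd hw' ((hh7 _ _ hw hroot).2 _ _ _)
      · have hb2 := hbne _ _ hbb
        rw [hb2] at hwS
        rcases hw with hw | hw
        · exact absurd hwS (hXS _ _ hw)
        · exact absurd hwS (hSdisj2 _ _ (hRhS _ _ hw))
    · -- inner vs stem (symmetric)
      rw [mergeD_inner Bstar ha g rr r Rw Rh Q hc hne] at hw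
      rw [mergeD_stem Bstar ha g rr r Rw Rh Q hc' hne'] at hw'
      have hwS : w ∈ S (u.1.getLast hne) := hQinS _ _ _ _ _ hw
      by_cases hbb : v'.1.getLast (chld_snd_ne hc') = u.1.getLast hne
      · rw [← hbb] at hw
        rcases hw' with hw' | hw'
        · have hwr : w = rr _ := hmeet _ w hw' (by rw [hbb]; exact hwS)
          have hst : w ∈ (Rh (v'.1.getLast (chld_snd_ne hc'))).support := by
            rw [hwr]
            exact SimpleGraph.Walk.start_mem_support _
          by_cases hroot : w = g (v'.1.getLast (chld_snd_ne hc')) ⟨[], ha⟩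
          · exact Or.inr ⟨_, _, hroot⟩
          · exact absurd hw ((hh7 _ _ hst hroot).2 _ _ _)
        · by_cases hroot : w = g (v'.1.getLast (chld_snd_ne hc')) ⟨[], ha⟩
          · exact Or.inr ⟨_, _, hroot⟩
          · exact absurd hw ((hh7 _ _ hw' hroot).2 _ _ _)
      · have hb2 := hbne _ _ hbb
        rw [hb2] at hwS
        rcases hw' with hw' | hw'
        · exact absurd hwS (hXS _ _ hw')
        · exact absurd hwS (hSdisj2 _ _ (hRhS _ _ hw'))
    · -- both inner
      rw [mergeD_inner Bstar ha g rr r Rw Rh Q hc hne] at hw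
      rw [mergeD_inner Bstar ha g rr r Rw Rh Q hc' hne'] at hw'
      by_cases hss : u.1.getLast hne = u'.1.getLast hne'
      · rw [← hss] at hw'
        have hepair : s(body u hne, body v (chld_snd_ne hc)) ≠
            s(body u' hne', body v' (chld_snd_ne hc')) := by
          intro he
          have hcb := chld_body hc hne
          have hcb' : chld (body u' hne') (body v' (chld_snd_ne hc')) := chld_body hc' hne'
          have hcb'' : chld (body u' hne') (body v' (chld_snd_ne hc')) := hcb'
          obtain ⟨e1, e2⟩ := chld_pair_eq hcb hcb' he
          apply hpne
          have hu2 : u = u' := by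
            rw [← att_body u hne, ← att_body u' hne', hss, e1]
          have hv2 : v = v' := by
            rw [← att_body v (chld_snd_ne hc), ← att_body v' (chld_snd_ne hc')]
            rw [getLast_chld hc hne, getLast_chld hc' hne', hss, e2]
          rw [hu2, hv2]
        have hr := (hsub _).2.2.2.2 _ _ _ _ _ _ hepair w hw hw'
        rcases hr with ⟨y, hy⟩
        exact Or.inr ⟨_, y, hy.symm⟩
      · have h1 := hQinS _ _ _ _ _ hw
        have h2 := hQinS _ _ _ _ _ hw'
        rw [hbne _ _ hss] at h2
        exact absurd h2 (hSdisj2 _ _ h1)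
  obtain ⟨P, hP, hPsupp⟩ := orient (mergeG g r) (mergeD Bstar ha g rr r Rw Rh Q)
    hinj hpath hint hdisj
  -- membership helpers
  have hsub1 : ∀ b w, w ∈ S b →
      w ∈ (S false ∪ S true ∪ {w | w ∈ (Rw false).support} ∪ {w | w ∈ (Rw true).support}) := by
    intro b w hw
    cases b
    · exact Or.inl (Or.inl (Or.inl hw))
    · exact Or.inl (Or.inl (Or.inr hw))
  have hsub2 : ∀ b w, w ∈ (Rw b).support →
      w ∈ (S false ∪ S true ∪ {w | w ∈ (Rw false).support} ∪ {w | w ∈ (Rw true).support}) := by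
    intro b w hw
    cases b
    · exact Or.inl (Or.inr hw)
    · exact Or.inr hw
  refine ⟨mergeG g r, P, SimpleGraph.Walk.nil.copy rfl (mergeG_root g r ha1).symm,
    hP, ?_, ?_, ?_, ?_, ?_, ?_⟩
  · -- monochromatic
    intro x
    by_cases hx : x.1 = []
    · rw [mergeG_nil g r x hx, hCr]
    · rw [mergeG_cons g r x hx]
      exact hmono _ _
  · rw [SimpleGraph.Walk.isPath_copy]
    exact SimpleGraph.Walk.IsPath.nil
  · intro x
    by_cases hx : x.1 = []
    · rw [mergeG_nil g r x hx]
      exact hrT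
    · rw [mergeG_cons g r x hx]
      exact hsub1 _ _ (hgrange _ _)
  · intro u v h w hw
    obtain ⟨u', v', hc', hw'⟩ := hPsupp u v h w hw
    by_cases hne : u'.1 = []
    · rw [mergeD_stem Bstar ha g rr r Rw Rh Q hc' hne] at hw'
      rcases hw' with hw' | hw'
      · exact hsub2 _ _ hw'
      · exact hsub1 _ _ (hRhS _ _ hw')
    · rw [mergeD_inner Bstar ha g rr r Rw Rh Q hc' hne] at hw'
      exact hsub1 _ _ (hQinS _ _ _ _ _ hw')
  · intro w hw
    rw [SimpleGraph.Walk.support_copy] at hw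
    simp only [SimpleGraph.Walk.support_nil, List.mem_singleton] at hw
    rw [hw]
    exact hrT
  · intro w hw hwne
    rw [SimpleGraph.Walk.support_copy] at hw
    simp only [SimpleGraph.Walk.support_nil, List.mem_singleton] at hw
    exact absurd (hw.trans (mergeG_root g r ha1).symm) hwne

end Broom

section Main

variable {W : Type} {k : ℕ} {Bstar : SimpleGraph W} {C : W → Fin k}
variable {d : ℕ}

lemma suffix_total {l1 l2 l3 : List Bool} (h1 : l1 <:+ l3) (h2 : l2 <:+ l3) :
    l1 <:+ l2 ∨ l2 <:+ l1 := by
  rcases List.prefix_or_prefix_of_prefix h1.reverse h2.reverse with h | h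
  · left; exact List.reverse_prefix.mp (by simpa using h)
  · right; exact List.reverse_prefix.mp (by simpa using h)

lemma not_cons_suffix {b : Bool} {l : List Bool} : ¬ (b :: l) <:+ l := by
  intro h
  have := h.length_le
  simp only [List.length_cons] at this
  omega

def region (f : BV d → W) (P : ∀ u v, (binaryTree d).Adj u v → Bstar.Walk (f u) (f v))
    (l : List Bool) : Set W :=
  { w | (∃ m : BV d, l <:+ m.1 ∧ w = f m) ∨
        ∃ (u v : BV d) (h : (binaryTree d).Adj u v),
          l <:+ u.1 ∧ l <:+ v.1 ∧ w ∈ (P u v h).support }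

variable {f : BV d → W} {P : ∀ u v, (binaryTree d).Adj u v → Bstar.Walk (f u) (f v)}

lemma region_mono {l l' : List Bool} (h : l <:+ l') : region f P l' ⊆ region f P l := by
  intro w hw
  rcases hw with ⟨m, hm, rfl⟩ | ⟨u, v, h', hu, hv, hw⟩
  · exact Or.inl ⟨m, h.trans hm, rfl⟩
  · exact Or.inr ⟨u, v, h', h.trans hu, h.trans hv, hw⟩

lemma mem_region_f {l : List Bool} (m : BV d) (hm : l <:+ m.1) : f m ∈ region f P l :=
  Or.inl ⟨m, hm, rfl⟩

lemma mem_region_P {l : List Bool} {u v : BV d} (h : (binaryTree d).Adj u v)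
    (hu : l <:+ u.1) (hv : l <:+ v.1) {w : W} (hw : w ∈ (P u v h).support) :
    w ∈ region f P l :=
  Or.inr ⟨u, v, h, hu, hv, hw⟩

lemma supp_range (hIS : IsSubdivPaths (binaryTree d) Bstar f P) {u v : BV d}
    (h : (binaryTree d).Adj u v) {w : W} (hw : w ∈ (P u v h).support)
    (hr : w ∈ Set.range f) : w = f u ∨ w = f v := by
  by_cases h1 : w = f u
  · exact Or.inl h1
  by_cases h2 : w = f v
  · exact Or.inr h2
  exact absurd hr (hIS.2.2.2.1 u v h w hw h1 h2)

lemma region_disjoint (hIS : IsSubdivPaths (binaryTree d) Bstar f P) {l1 l2 : List Bool}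
    (h12 : ¬ l1 <:+ l2) (h21 : ¬ l2 <:+ l1) {w : W}
    (hw1 : w ∈ region f P l1) (hw2 : w ∈ region f P l2) : False := by
  have comp : ∀ m : List Bool, l1 <:+ m → l2 <:+ m → False := by
    intro m hm1 hm2
    rcases suffix_total hm1 hm2 with h | h
    · exact h12 h
    · exact h21 h
  -- find a common vertex x with l1 <:+ x.1 (from hw1) and l2 <:+ x.1 (from hw2)
  have key1 : ∃ x : BV d, l1 <:+ x.1 ∧ w = f x := by
    rcases hw1 with ⟨m1, hm1, he⟩ | ⟨u1, v1, ha1, hu1, hv1, hs1⟩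
    · exact ⟨m1, hm1, he⟩
    · -- w in a path of subtree l1 and also in region l2
      rcases hw2 with ⟨m2, hm2, he⟩ | ⟨u2, v2, ha2, hu2, hv2, hs2⟩
      · rcases supp_range hIS ha1 hs1 ⟨m2, he.symm⟩ with he' | he'
        · exact ⟨u1, hu1, he'⟩
        · exact ⟨v1, hv1, he'⟩
      · by_cases hs : s(u1, v1) = s(u2, v2)
        · rw [Sym2.eq_iff] at hs
          rcases hs with ⟨he1, he2⟩ | ⟨he1, he2⟩
          · exact absurd (he1 ▸ hu2) (fun h => comp u1.1 hu1 h)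
          · exact absurd (he2 ▸ hu2) (fun h => comp v1.1 hv1 h)
        · have hr := hIS.2.2.2.2 u1 v1 ha1 u2 v2 ha2 hs w hs1 hs2
          rcases supp_range hIS ha1 hs1 hr with he' | he'
          · exact ⟨u1, hu1, he'⟩
          · exact ⟨v1, hv1, he'⟩
  obtain ⟨x, hx1, hxw⟩ := key1
  have key2 : l2 <:+ x.1 := by
    rcases hw2 with ⟨m2, hm2, he⟩ | ⟨u2, v2, ha2, hu2, hv2, hs2⟩
    · have : x = m2 := hIS.1 (hxw.symm.trans he)
      rw [this]
      exact hm2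
    · rcases supp_range hIS ha2 hs2 ⟨x, hxw.symm⟩ with he' | he'
      · have : x = u2 := hIS.1 (hxw.symm.trans he')
        rw [this]; exact hu2
      · have : x = v2 := hIS.1 (hxw.symm.trans he')
        rw [this]; exact hv2
  exact comp x.1 hx1 key2

lemma region_child (hIS : IsSubdivPaths (binaryTree d) Bstar f P) {l : List Bool}
    {b b' : Bool} (hl : l.length < d) (hl2 : l.length + 1 < d)
    {w : W} (hw : w ∈ (P ⟨l, hl⟩ ⟨b :: l, hl2⟩ (chld_adj ⟨b, rfl⟩)).support)
    (hw2 : w ∈ region f P (b' :: l)) : b' = b ∧ w = f ⟨b :: l, hl2⟩ := by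
  have hlb : ∀ (m : BV d), (b' :: l) <:+ m.1 → (m = ⟨l, hl⟩ ∨ m = ⟨b :: l, hl2⟩) →
      b' = b ∧ m = ⟨b :: l, hl2⟩ := by
    intro m hm hc
    rcases hc with rfl | rfl
    · exact absurd hm not_cons_suffix
    · have : b' :: l = b :: l := hm.eq_of_length (by simp)
      exact ⟨(List.cons.injEq _ _ _ _ ▸ this).1, rfl⟩
  rcases hw2 with ⟨m2, hm2, he⟩ | ⟨u2, v2, ha2, hu2, hv2, hs2⟩
  · rcases supp_range hIS _ hw ⟨m2, he.symm⟩ with he' | he'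
    · obtain ⟨hb, hm⟩ := hlb m2 hm2 (Or.inl (hIS.1 (he.symm.trans he').symm).symm)
      exact ⟨hb, by rw [he, hm]⟩
    · obtain ⟨hb, hm⟩ := hlb m2 hm2 (Or.inr (hIS.1 (he.symm.trans he').symm).symm)
      exact ⟨hb, by rw [he, hm]⟩
  · by_cases hs : s(⟨l, hl⟩, (⟨b :: l, hl2⟩ : BV d)) = s(u2, v2)
    · rw [Sym2.eq_iff] at hs
      rcases hs with ⟨he1, he2⟩ | ⟨he1, he2⟩
      · exact absurd (he1 ▸ hu2) not_cons_suffix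
      · exact absurd (he1 ▸ hv2) not_cons_suffix
    · have hr := hIS.2.2.2.2 _ _ (chld_adj ⟨b, rfl⟩) u2 v2 ha2 hs w hw hs2
      rcases supp_range hIS _ hw hr with he' | he'
      · exfalso
        rcases supp_range hIS ha2 hs2 hr with he2 | he2
        · have : u2 = ⟨l, hl⟩ := hIS.1 (he2.symm.trans he')
          exact not_cons_suffix (this ▸ hu2)
        · have : v2 = ⟨l, hl⟩ := hIS.1 (he2.symm.trans he')
          exact not_cons_suffix (this ▸ hv2)
      · refine ⟨?_, he'⟩
        rcases supp_range hIS ha2 hs2 hr with he2 | he2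
        · have : u2 = ⟨b :: l, hl2⟩ := hIS.1 (he2.symm.trans he')
          have h3 := this ▸ hu2
          exact ((List.cons.injEq _ _ _ _ ▸ (h3.eq_of_length (by simp))).1)
        · have : v2 = ⟨b :: l, hl2⟩ := hIS.1 (he2.symm.trans he')
          have h3 := this ▸ hv2
          exact ((List.cons.injEq _ _ _ _ ▸ (h3.eq_of_length (by simp))).1)

lemma region_parent_not_mem (hIS : IsSubdivPaths (binaryTree d) Bstar f P) {l : List Bool}
    {b : Bool} (hl : l.length < d) :
    f ⟨l, hl⟩ ∉ region f P (b :: l) := by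
  intro hw
  rcases hw with ⟨m2, hm2, he⟩ | ⟨u2, v2, ha2, hu2, hv2, hs2⟩
  · have : (⟨l, hl⟩ : BV d) = m2 := hIS.1 he
    rw [← this] at hm2
    exact not_cons_suffix hm2
  · rcases supp_range hIS ha2 hs2 ⟨⟨l, hl⟩, rfl⟩ with he' | he'
    · have : u2 = ⟨l, hl⟩ := hIS.1 he'.symm
      exact not_cons_suffix (this ▸ hu2)
    · have : v2 = ⟨l, hl⟩ := hIS.1 he'.symm
      exact not_cons_suffix (this ▸ hv2)

lemma stems_inter (hIS : IsSubdivPaths (binaryTree d) Bstar f P) {l : List Bool}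
    (hl : l.length < d) (hl2 : l.length + 1 < d) {b b' : Bool} (hbb : b ≠ b') {w : W}
    (hw : w ∈ (P ⟨l, hl⟩ ⟨b :: l, hl2⟩ (chld_adj ⟨b, rfl⟩)).support)
    (hw' : w ∈ (P ⟨l, hl⟩ ⟨b' :: l, hl2⟩ (chld_adj ⟨b', rfl⟩)).support) :
    w = f ⟨l, hl⟩ := by
  have hvv : (⟨b :: l, hl2⟩ : BV d) ≠ ⟨b' :: l, hl2⟩ := by
    intro he
    have := congrArg (fun z : BV d => z.1) he
    simp only [List.cons.injEq] at this
    exact hbb this.1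
  have hll : ∀ b0 : Bool, (⟨l, hl⟩ : BV d) ≠ ⟨b0 :: l, hl2⟩ := by
    intro b0 he
    have := congrArg (fun z : BV d => z.1.length) he
    simp at this
  have hs : s((⟨l, hl⟩ : BV d), (⟨b :: l, hl2⟩ : BV d)) ≠ s(⟨l, hl⟩, ⟨b' :: l, hl2⟩) := by
    intro he
    rw [Sym2.eq_iff] at he
    rcases he with ⟨he1, he2⟩ | ⟨he1, he2⟩
    · exact hvv he2
    · exact hll b' he1
  have hr := hIS.2.2.2.2 _ _ (chld_adj ⟨b, rfl⟩) _ _ (chld_adj ⟨b', rfl⟩) hs w hw hw'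
  rcases supp_range hIS _ hw hr with he | he
  · exact he
  · exfalso
    rcases supp_range hIS _ hw' hr with he2 | he2
    · exact hll b (hIS.1 (he.symm.trans he2)).symm
    · exact hvv (hIS.1 (he.symm.trans he2))

lemma combine (hIS : IsSubdivPaths (binaryTree d) Bstar f P) {l : List Bool}
    (hl : l.length < d) (hl2 : l.length + 1 < d) (bb : Bool) (aL aR : Fin k → ℕ)
    (hL : ∀ i, Broom Bstar C (region f P (bb :: l)) (f ⟨bb :: l, hl2⟩) i (aL i))
    (hR : ∀ i, Broom Bstar C (region f P ((!bb) :: l)) (f ⟨(!bb) :: l, hl2⟩) i (aR i))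
    (hcc : aL (C (f ⟨l, hl⟩)) ≤ aR (C (f ⟨l, hl⟩))) :
    ∀ i, Broom Bstar C (region f P l) (f ⟨l, hl⟩) i
      (Function.update aL (C (f ⟨l, hl⟩)) (aL (C (f ⟨l, hl⟩)) + 1) i) := by
  have hadj : ∀ b0 : Bool, (binaryTree d).Adj ⟨l, hl⟩ ⟨b0 :: l, hl2⟩ :=
    fun b0 => chld_adj ⟨b0, rfl⟩
  have hsuf : ∀ b0 : Bool, l <:+ (b0 :: l) := fun b0 => ⟨[b0], rfl⟩
  have hsub1 : ∀ b0 : Bool, region f P (b0 :: l) ⊆ region f P l :=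
    fun b0 => region_mono (hsuf b0)
  have hsub2 : ∀ b0 : Bool, ∀ w ∈ (P ⟨l, hl⟩ ⟨b0 :: l, hl2⟩ (hadj b0)).support,
      w ∈ region f P l :=
    fun b0 w hw => mem_region_P (hadj b0) (List.suffix_refl _) (hsuf b0) hw
  intro i
  by_cases hi : i = C (f ⟨l, hl⟩)
  · subst hi
    rw [Function.update_self]
    refine Broom.mono_set ?_
      (Broom.merge (S := fun s => region f P ((cond s (!bb) bb) :: l))
        (rr := fun s => f ⟨(cond s (!bb) bb) :: l, hl2⟩)
        (fun s => ?_)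
        (fun s => P ⟨l, hl⟩ ⟨(cond s (!bb) bb) :: l, hl2⟩ (hadj _))
        (fun s => hIS.2.1 _ _ _) ?_ ?_ ?_ ?_ rfl)
    · -- union subset of region l
      intro w hw
      rcases hw with ((hw | hw) | hw) | hw
      · exact hsub1 _ hw
      · exact hsub1 _ hw
      · exact hsub2 _ w hw
      · exact hsub2 _ w hw
    · -- the two brooms
      cases s
      · exact hL _
      · exact (hR _).mono_depth hcc
    · -- S false and S true disjoint
      intro w h1 h2
      have hne1 : ¬ (bb :: l) <:+ ((!bb) :: l) := by
        intro h
        have := h.eq_of_length (by simp)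
        simp only [List.cons.injEq] at this
        revert this
        cases bb <;> decide
      have hne2 : ¬ ((!bb) :: l) <:+ (bb :: l) := by
        intro h
        have := h.eq_of_length (by simp)
        simp only [List.cons.injEq] at this
        revert this
        cases bb <;> decide
      exact region_disjoint hIS hne1 hne2 h1 h2
    · -- meeting condition
      intro s w hw hw2
      exact (region_child hIS hl hl2 hw hw2).2
    · -- cross condition
      intro s w hw hw2
      have h3 := (region_child hIS hl hl2 hw hw2).1
      revert h3
      cases s <;> cases bb <;> decide
    · -- stems meet only at root
      intro w h1 h2
      exact stems_inter hIS hl hl2 (by cases bb <;> decide) h1 h2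
  · rw [Function.update_of_ne hi]
    refine Broom.mono_set ?_
      (Broom.extend (hL i) (P ⟨l, hl⟩ ⟨bb :: l, hl2⟩ (hadj bb)) (hIS.2.1 _ _ _) ?_)
    · intro w hw
      rcases hw with hw | hw
      · exact hsub1 _ hw
      · exact hsub2 _ w hw
    · intro w hw hw2
      exact (region_child hIS hl hl2 hw hw2).2

lemma main (hIS : IsSubdivPaths (binaryTree d) Bstar f P) (C : W → Fin k) :
    ∀ (m : ℕ) (l : List Bool) (hl : l.length + (m + 1) = d),
    ∃ a : Fin k → ℕ, (∑ i, a i) = m + 1 ∧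
      ∀ i, Broom Bstar C (region f P l) (f ⟨l, by omega⟩) i (a i) := by
  intro m
  induction m with
  | zero =>
    intro l hl
    refine ⟨Function.update (fun _ => 0) (C (f ⟨l, by omega⟩)) 1, ?_, ?_⟩
    · rw [Finset.sum_update_of_mem (Finset.mem_univ _)]
      simp
    · intro i
      by_cases hi : i = C (f ⟨l, by omega⟩)
      · subst hi
        rw [Function.update_self]
        exact Broom.single (mem_region_f _ (List.suffix_refl _)) rfl
      · rw [Function.update_of_ne hi]
        exact Broom.zero
  | succ m ih =>
    intro l hl
    have hl' : l.length < d := by omega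
    have hl2 : l.length + 1 < d := by omega
    obtain ⟨aF, hsF, hbF⟩ := ih (false :: l) (by simp; omega)
    obtain ⟨aT, hsT, hbT⟩ := ih (true :: l) (by simp; omega)
    rcases le_total (aF (C (f ⟨l, hl'⟩))) (aT (C (f ⟨l, hl'⟩))) with hcc | hcc
    · refine ⟨Function.update aF (C (f ⟨l, hl'⟩)) (aF (C (f ⟨l, hl'⟩)) + 1), ?_, ?_⟩
      · rw [Finset.sum_update_of_mem (Finset.mem_univ _)]
        have h2 := Finset.add_sum_erase Finset.univ aF (Finset.mem_univ (C (f ⟨l, hl'⟩)))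
        rw [Finset.sdiff_singleton_eq_erase]
        omega
      · exact combine hIS hl' hl2 false aF aT hbF hbT hcc
    · refine ⟨Function.update aT (C (f ⟨l, hl'⟩)) (aT (C (f ⟨l, hl'⟩)) + 1), ?_, ?_⟩
      · rw [Finset.sum_update_of_mem (Finset.mem_univ _)]
        have h2 := Finset.add_sum_erase Finset.univ aT (Finset.mem_univ (C (f ⟨l, hl'⟩)))
        rw [Finset.sdiff_singleton_eq_erase]
        omega
      · exact combine hIS hl' hl2 true aT aF hbT hbF hcc

end Main

section Assemble

variable {W : Type} {k : ℕ}

lemma subdiv_zero (Bstar : SimpleGraph W) (C : W → Fin k) (i : Fin k) :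
    ∃ (g : BV 0 → W) (Q : ∀ u v, (binaryTree 0).Adj u v → Bstar.Walk (g u) (g v)),
      IsSubdivPaths (binaryTree 0) Bstar g Q ∧ ∀ x, C (g x) = i := by
  have he : ∀ x : BV 0, False := fun x => by have := x.2; omega
  refine ⟨fun x => (he x).elim, fun u v h => (he u).elim, ⟨?_, ?_, ?_, ?_, ?_⟩, ?_⟩
  · intro x y hxy
    exact (he x).elim
  · intro u v h
    exact (he u).elim
  · intro u v h
    exact (he u).elim
  · intro u v h
    exact (he u).elim
  · intro u v h
    exact (he u).elim
  · intro x
    exact (he x).elim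

lemma broom_to_subdiv {Bstar : SimpleGraph W} {C : W → Fin k} {S : Set W} {r : W}
    {i : Fin k} {a : ℕ} (h : Broom Bstar C S r i a) :
    ∃ (g : BV a → W) (Q : ∀ u v, (binaryTree a).Adj u v → Bstar.Walk (g u) (g v)),
      IsSubdivPaths (binaryTree a) Bstar g Q ∧ ∀ x, C (g x) = i := by
  rcases Nat.eq_zero_or_pos a with rfl | hp
  · exact subdiv_zero Bstar C i
  · obtain ⟨g, Q, R, h1, h2, _⟩ := h hp
    exact ⟨g, Q, h1, h2⟩

end Assemble

end Stmt6Aux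


open Stmt6Aux

theorem stmt6 {W : Type} (d k : ℕ) (Bstar : SimpleGraph W)
    (hsub : Subdivides (binaryTree d) Bstar) (C : W → Fin k) :
    ∃ a : Fin k → ℕ, (∑ i, a i) = d ∧
      ∀ i : Fin k, ∃ (f : {l : List Bool // l.length < a i} → W)
        (P : ∀ u v, (binaryTree (a i)).Adj u v → Bstar.Walk (f u) (f v)),
        IsSubdivPaths (binaryTree (a i)) Bstar f P ∧ ∀ x, C (f x) = i := by
  obtain ⟨f0, P0, hIS0, -, -⟩ := hsub
  rcases Nat.eq_zero_or_pos d with rfl | hd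
  · refine ⟨fun _ => 0, by simp, ?_⟩
    intro i
    exact subdiv_zero Bstar C i
  · obtain ⟨m, rfl⟩ : ∃ m, d = m + 1 := ⟨d - 1, by omega⟩
    obtain ⟨a, hsum, hbr⟩ := main hIS0 C m [] (by simp)
    refine ⟨a, hsum, ?_⟩
    intro i
    exact broom_to_subdiv (hbr i)
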